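/- Let θ ∈ [0, 1/2) and define g(θ) = 1/2 + θ + (1/2)∫_{q}^∞ r dF_{χ²}(r), where F_{χ²} is the CDF of a chi-squared random variable with one degree of freedom and q = F_{χ²}^{-1}(1−2θ). Then g is continuous and monotonically increasing on [0, 1/2), g(0) = 1/2, and g(θ) → 3/2 as θ → 1/2; consequently there is a unique θ* ∈ (0, 1/2) with g(θ*) = 1. -/

import Mathlib

open MeasureTheory ProbabilityTheory Real Filter Set Topology
open scoped ENNReal NNReal

/-- CDF of a chi-squared random variable with one degree of freedom: `F(r) = P(G² ≤ r)`. -/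
noncomputable def chiCDF (r : ℝ) : ℝ := (gaussianReal 0 1 {x : ℝ | x ^ 2 ≤ r}).toReal

/-- `g(θ) = 1/2 + θ + (1/2)∫_{F⁻¹(1−2θ)}^∞ r dF(r)`, where the upper-tail partial
expectation is written as `E[G² · 1(F(G²) ≥ 1 − 2θ)]`. -/
noncomputable def gfun (θ : ℝ) : ℝ :=
  1 / 2 + θ + (1 / 2) *
    ∫ x : ℝ, (if 1 - 2 * θ ≤ chiCDF (x ^ 2) then x ^ 2 else 0) ∂(gaussianReal 0 1)

noncomputable def phi : ℝ → ℝ := gaussianPDFReal 0 1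
lemma phi_pos (x : ℝ) : 0 < phi x := gaussianPDFReal_pos 0 1 x one_ne_zero
lemma phi_int : Integrable phi := integrable_gaussianPDFReal 0 1
lemma phi_total : ∫ x, phi x = 1 := integral_gaussianPDFReal_eq_one 0 one_ne_zero

noncomputable def Fc (t : ℝ) : ℝ := ∫ u in (-t)..t, phi u

lemma chiCDF_sq (x : ℝ) : chiCDF (x ^ 2) = Fc |x| := by
  have hset : {y : ℝ | y ^ 2 ≤ x ^ 2} = Set.Icc (-|x|) |x| := by
    ext y; rw [Set.mem_setOf_eq, sq_le_sq, Set.mem_Icc, abs_le]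
  rw [chiCDF, hset, gaussianReal_apply_eq_integral 0 one_ne_zero,
    ENNReal.toReal_ofReal (setIntegral_nonneg measurableSet_Icc
      (fun y _ => gaussianPDFReal_nonneg 0 1 y))]
  simp only [Fc, phi]
  rw [intervalIntegral.integral_of_le (neg_le_self (abs_nonneg x)),
    ← integral_Icc_eq_integral_Ioc]

lemma Fc_cont : Continuous Fc := by
  have h : Continuous fun t : ℝ => ∫ u in (0:ℝ)..t, phi u :=
    phi_int.continuous_primitive 0
  have : Fc = fun t => (∫ u in (0:ℝ)..t, phi u) - ∫ u in (0:ℝ)..(-t), phi u := by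
    funext t
    have A := intervalIntegral.integral_add_adjacent_intervals
      (μ := volume) (f := phi) (a := -t) (b := 0) (c := t)
      phi_int.intervalIntegrable phi_int.intervalIntegrable
    have B := intervalIntegral.integral_symm (μ := volume) (f := phi) 0 (-t)
    rw [Fc]
    rw [← A, B]
    ring
  rw [this]
  exact h.sub (h.comp continuous_neg)

lemma Fc_split {s t : ℝ} : Fc t = (∫ u in (-t)..(-s), phi u) + Fc s + ∫ u in s..t, phi u := by
  have A := intervalIntegral.integral_add_adjacent_intervals
    (μ := volume) (f := phi) (a := -t) (b := -s) (c := s)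
    phi_int.intervalIntegrable phi_int.intervalIntegrable
  have B := intervalIntegral.integral_add_adjacent_intervals
    (μ := volume) (f := phi) (a := -t) (b := s) (c := t)
    phi_int.intervalIntegrable phi_int.intervalIntegrable
  rw [Fc, Fc]
  linarith

lemma Fc_mono {s t : ℝ} (hs : 0 ≤ s) (hst : s ≤ t) : Fc s ≤ Fc t := by
  rw [Fc_split (s := s) (t := t)]
  have h1 : 0 ≤ ∫ u in (-t)..(-s), phi u :=
    intervalIntegral.integral_nonneg (by linarith) (fun u _ => (phi_pos u).le)
  have h2 : 0 ≤ ∫ u in s..t, phi u :=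
    intervalIntegral.integral_nonneg hst (fun u _ => (phi_pos u).le)
  linarith

lemma Fc_strict {s t : ℝ} (hs : 0 ≤ s) (hst : s < t) : Fc s < Fc t := by
  rw [Fc_split (s := s) (t := t)]
  have h1 : 0 ≤ ∫ u in (-t)..(-s), phi u :=
    intervalIntegral.integral_nonneg (by linarith) (fun u _ => (phi_pos u).le)
  have h2 : 0 < ∫ u in s..t, phi u :=
    intervalIntegral.intervalIntegral_pos_of_pos
      (phi_int.intervalIntegrable (a := s) (b := t)) phi_pos hst
  linarith

lemma Fc_lim : Tendsto Fc atTop (𝓝 1) := by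
  rw [← phi_total]
  exact intervalIntegral_tendsto_integral phi_int tendsto_neg_atTop_atBot tendsto_id

lemma Fc_lt_one (t : ℝ) (ht : 0 ≤ t) : Fc t < 1 := by
  have h2 : Fc (t + 1) ≤ 1 := by
    refine ge_of_tendsto Fc_lim ?_
    filter_upwards [eventually_ge_atTop (t + 1)] with s hs
    exact Fc_mono (by linarith) hs
  exact lt_of_lt_of_le (Fc_strict ht (lt_add_one t)) h2

lemma phi_eq (x : ℝ) : phi x = (Real.sqrt (2 * π))⁻¹ * Real.exp (-(1/2) * x ^ 2) := by
  simp only [phi, gaussianPDFReal, NNReal.coe_one, mul_one, sub_zero]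
  congr 1
  ring

lemma integrable_sq_exp : Integrable (fun x : ℝ => x ^ 2 * Real.exp (-(1/2) * x ^ 2)) := by
  have h := integrable_rpow_mul_exp_neg_mul_sq (b := 1/2) (by norm_num) (s := 2) (by norm_num)
  refine h.congr (Filter.Eventually.of_forall fun x => ?_)
  have : x ^ (2:ℝ) = x ^ (2:ℕ) := Real.rpow_natCast x 2
  simp only [this]

lemma sq_exp_integral : ∫ x : ℝ, x ^ 2 * Real.exp (-(1/2) * x ^ 2) = Real.sqrt (2 * π) := by
  have hderiv : ∀ x : ℝ, HasDerivAt (fun y : ℝ => y * Real.exp (-(1/2) * y ^ 2))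
      ((1 - x ^ 2) * Real.exp (-(1/2) * x ^ 2)) x := by
    intro x
    have h1 : HasDerivAt (fun y : ℝ => -(1/2) * y ^ 2) (-(1/2) * (2 * x)) x := by
      simpa using ((hasDerivAt_pow 2 x).const_mul (-(1/2) : ℝ))
    have h2 := h1.exp
    have h3 := (hasDerivAt_id x).fun_mul h2
    refine h3.congr_deriv ?_
    simp only [id_eq]
    ring
  have hint : Integrable (fun x : ℝ => (1 - x ^ 2) * Real.exp (-(1/2) * x ^ 2)) := by
    have h0 := integrable_exp_neg_mul_sq (b := (1/2 : ℝ)) (by norm_num)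
    refine (h0.sub integrable_sq_exp).congr (Filter.Eventually.of_forall fun x => ?_)
    try simp only [Pi.sub_apply]
    ring
  have hf : Integrable (fun x : ℝ => x * Real.exp (-(1/2) * x ^ 2)) :=
    integrable_mul_exp_neg_mul_sq (by norm_num)
  have hzero := integral_eq_zero_of_hasDerivAt_of_integrable hderiv hint hf
  have hsplit : ∫ x : ℝ, (1 - x ^ 2) * Real.exp (-(1/2) * x ^ 2)
      = (∫ x : ℝ, Real.exp (-(1/2) * x ^ 2)) - ∫ x : ℝ, x ^ 2 * Real.exp (-(1/2) * x ^ 2) := by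
    rw [← integral_sub (integrable_exp_neg_mul_sq (by norm_num)) integrable_sq_exp]
    congr 1
    funext x
    try simp only [Pi.sub_apply]
    ring

  have hg : ∫ x : ℝ, Real.exp (-(1/2) * x ^ 2) = Real.sqrt (2 * π) := by
    rw [integral_gaussian]
    congr 1
    ring
  rw [hsplit, hg] at hzero
  linarith

lemma sqrt_two_pi_pos : 0 < Real.sqrt (2 * π) :=
  Real.sqrt_pos.2 (by positivity)

lemma pdfNN_meas : Measurable fun x : ℝ => (gaussianPDFReal 0 1 x).toNNReal :=
  (measurable_gaussianPDFReal 0 1).real_toNNReal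

lemma integral_gaussianReal (g : ℝ → ℝ) :
    ∫ x, g x ∂(gaussianReal 0 1) = ∫ x, phi x * g x := by
  rw [gaussianReal_of_var_ne_zero 0 one_ne_zero]
  have hpdf : gaussianPDF 0 1 = fun x => ((gaussianPDFReal 0 1 x).toNNReal : ℝ≥0∞) := rfl
  rw [hpdf, integral_withDensity_eq_integral_smul pdfNN_meas]
  congr 1
  funext x
  simp only [NNReal.smul_def, Real.coe_toNNReal _ (gaussianPDFReal_nonneg 0 1 x), smul_eq_mul]
  rfl

lemma integrable_gaussianReal {g : ℝ → ℝ} (hg : Integrable (fun x => phi x * g x)) :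
    Integrable g (gaussianReal 0 1) := by
  rw [gaussianReal_of_var_ne_zero 0 one_ne_zero]
  have hpdf : gaussianPDF 0 1 = fun x => ((gaussianPDFReal 0 1 x).toNNReal : ℝ≥0∞) := rfl
  rw [hpdf, integrable_withDensity_iff_integrable_smul pdfNN_meas]
  refine hg.congr (Filter.Eventually.of_forall fun x => ?_)
  simp only [NNReal.smul_def, Real.coe_toNNReal _ (gaussianPDFReal_nonneg 0 1 x), smul_eq_mul]
  rfl

lemma integrable_sq_gaussian : Integrable (fun x : ℝ => x ^ 2) (gaussianReal 0 1) := by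
  apply integrable_gaussianReal
  refine (integrable_sq_exp.const_mul ((Real.sqrt (2 * π))⁻¹)).congr
    (Filter.Eventually.of_forall fun x => ?_)
  simp only [phi_eq]
  ring

lemma integral_sq_gaussian : ∫ x : ℝ, x ^ 2 ∂(gaussianReal 0 1) = 1 := by
  rw [integral_gaussianReal]
  have : ∀ x : ℝ, phi x * x ^ 2 = (Real.sqrt (2 * π))⁻¹ * (x ^ 2 * Real.exp (-(1/2) * x ^ 2)) := by
    intro x; rw [phi_eq]; ring
  simp only [this]
  rw [MeasureTheory.integral_const_mul, sq_exp_integral, inv_mul_cancel₀ sqrt_two_pi_pos.ne']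

noncomputable def hfun (θ : ℝ) : ℝ :=
  ∫ x : ℝ, (if 1 - 2 * θ ≤ chiCDF (x ^ 2) then x ^ 2 else 0) ∂(gaussianReal 0 1)

lemma cont_chi : Continuous fun x : ℝ => chiCDF (x ^ 2) := by
  have h : (fun x : ℝ => chiCDF (x ^ 2)) = Fc ∘ abs := funext fun x => chiCDF_sq x
  rw [h]; exact Fc_cont.comp continuous_abs

lemma meas_set (θ : ℝ) : MeasurableSet {x : ℝ | 1 - 2 * θ ≤ chiCDF (x ^ 2)} :=
  (isClosed_le continuous_const cont_chi).measurableSet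

lemma hfun_meas (θ : ℝ) :
    Measurable fun x : ℝ => (if 1 - 2 * θ ≤ chiCDF (x ^ 2) then x ^ 2 else 0 : ℝ) :=
  Measurable.ite (meas_set θ) (measurable_id.pow_const 2) measurable_const

lemma hfun_bound (θ : ℝ) (x : ℝ) :
    ‖(if 1 - 2 * θ ≤ chiCDF (x ^ 2) then x ^ 2 else 0 : ℝ)‖ ≤ x ^ 2 := by
  rw [Real.norm_eq_abs]
  split
  · rw [abs_of_nonneg (sq_nonneg x)]
  · simp [sq_nonneg x]

lemma hfun_integrable (θ : ℝ) :
    Integrable (fun x : ℝ => if 1 - 2 * θ ≤ chiCDF (x ^ 2) then x ^ 2 else 0)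
      (gaussianReal 0 1) :=
  Integrable.mono' integrable_sq_gaussian ((hfun_meas θ).aestronglyMeasurable)
    (Filter.Eventually.of_forall (hfun_bound θ))

lemma level_null (a : ℝ) : gaussianReal 0 1 {x : ℝ | chiCDF (x ^ 2) = a} = 0 := by
  set N := {x : ℝ | chiCDF (x ^ 2) = a} with hN
  rcases eq_empty_or_nonempty N with h | ⟨x0, hx0⟩
  · simp [h]
  · have hsub : N ⊆ {x0, -x0} := by
      intro x hx
      have h1 : Fc |x| = Fc |x0| := by
        rw [← chiCDF_sq, ← chiCDF_sq]
        rw [hN, Set.mem_setOf_eq] at hx hx0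
        rw [hx, hx0]
      have h2 : |x| = |x0| := by
        by_contra hne
        rcases lt_or_gt_of_ne hne with h | h
        · exact absurd h1 (ne_of_lt (Fc_strict (abs_nonneg x) h))
        · exact absurd h1.symm (ne_of_lt (Fc_strict (abs_nonneg x0) h))
      rcases abs_eq_abs.1 h2 with h | h
      · exact Or.inl h
      · exact Or.inr h
    refine measure_mono_null hsub ?_
    apply gaussianReal_absolutelyContinuous 0 one_ne_zero
    exact (Set.finite_singleton (-x0)).insert x0 |>.measure_zero volume

lemma hfun_cont : Continuous hfun := by
  refine continuous_iff_seqContinuous.2 ?_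
  intro u θ hu
  have hnull := level_null (1 - 2 * θ)
  refine MeasureTheory.tendsto_integral_of_dominated_convergence (fun x => x ^ 2)
    (fun n => (hfun_meas (u n)).aestronglyMeasurable) integrable_sq_gaussian
    (fun n => Filter.Eventually.of_forall (hfun_bound (u n))) ?_
  have hae : ∀ᵐ x ∂(gaussianReal 0 1), chiCDF (x ^ 2) ≠ 1 - 2 * θ := by
    rw [ae_iff]
    simpa [not_not] using hnull
  filter_upwards [hae] with x hx
  have ht : Tendsto (fun n => 1 - 2 * u n) atTop (𝓝 (1 - 2 * θ)) :=
    tendsto_const_nhds.sub ((hu.const_mul 2))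
  rcases lt_or_gt_of_ne hx.symm with h | h
  · -- 1 - 2θ < chiCDF (x^2)
    rw [show (if 1 - 2 * θ ≤ chiCDF (x ^ 2) then x ^ 2 else 0) = x ^ 2 from if_pos h.le]
    refine Tendsto.congr' ?_ tendsto_const_nhds
    filter_upwards [ht.eventually_lt_const h] with n hn
    exact (if_pos hn.le).symm
  · -- chiCDF (x^2) < 1 - 2θ
    rw [show (if 1 - 2 * θ ≤ chiCDF (x ^ 2) then x ^ 2 else 0) = 0 from if_neg (not_le.2 h)]
    refine Tendsto.congr' ?_ tendsto_const_nhds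
    filter_upwards [ht.eventually_const_lt h] with n hn
    exact (if_neg (not_le.2 hn)).symm

lemma hfun_mono {θ₁ θ₂ : ℝ} (h : θ₁ ≤ θ₂) : hfun θ₁ ≤ hfun θ₂ := by
  refine integral_mono (hfun_integrable θ₁) (hfun_integrable θ₂) fun x => ?_
  dsimp only
  by_cases h1 : 1 - 2 * θ₁ ≤ chiCDF (x ^ 2)
  · rw [if_pos h1, if_pos (le_trans (by linarith) h1)]
  · rw [if_neg h1]
    split
    · exact sq_nonneg x
    · exact le_refl 0

lemma hfun_zero : hfun 0 = 0 := by
  have h : ∀ x : ℝ, (if 1 - 2 * (0:ℝ) ≤ chiCDF (x ^ 2) then x ^ 2 else 0) = 0 := by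
    intro x
    rw [if_neg]
    rw [chiCDF_sq, not_le]
    have := Fc_lt_one |x| (abs_nonneg x)
    linarith
  simp only [hfun, h, integral_zero]

lemma hfun_half : hfun (1/2) = 1 := by
  have h : ∀ x : ℝ, (if 1 - 2 * (1/2:ℝ) ≤ chiCDF (x ^ 2) then x ^ 2 else 0) = x ^ 2 := by
    intro x
    rw [if_pos]
    rw [show (1:ℝ) - 2 * (1/2) = 0 by norm_num]
    exact ENNReal.toReal_nonneg
  simp only [hfun, h]
  exact integral_sq_gaussian

lemma gfun_eq (θ : ℝ) : gfun θ = 1/2 + θ + 1/2 * hfun θ := rfl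

/-- `g` is continuous and strictly increasing on `[0, 1/2)`, `g(0) = 1/2`,
`g(θ) → 3/2` as `θ → 1/2⁻`, and there is a unique `θ* ∈ (0, 1/2)` with `g(θ*) = 1`. -/
theorem gfun_phase_threshold :
    ContinuousOn gfun (Set.Ico 0 (1 / 2)) ∧
    StrictMonoOn gfun (Set.Ico 0 (1 / 2)) ∧
    gfun 0 = 1 / 2 ∧
    Filter.Tendsto gfun (nhdsWithin (1 / 2) (Set.Iio (1 / 2))) (nhds (3 / 2)) ∧
    ∃! θ : ℝ, θ ∈ Set.Ioo 0 (1 / 2) ∧ gfun θ = 1 := by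
  have hgfun : gfun = fun θ => 1/2 + θ + 1/2 * hfun θ := funext gfun_eq
  have hcont : Continuous gfun := by
    rw [hgfun]
    exact (continuous_const.add continuous_id).add (continuous_const.mul hfun_cont)
  have hmono : StrictMonoOn gfun (Set.Ico 0 (1/2 : ℝ)) := by
    intro a _ b _ hab
    rw [gfun_eq, gfun_eq]
    have h1 : hfun a ≤ hfun b := hfun_mono hab.le
    linarith
  have hg0 : gfun 0 = 1/2 := by
    rw [gfun_eq, hfun_zero]; norm_num
  have hghalf : gfun (1/2) = 3/2 := by
    rw [gfun_eq, hfun_half]; norm_num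
  have htend : Tendsto gfun (nhdsWithin (1/2) (Set.Iio (1/2))) (𝓝 (3/2)) := by
    rw [← hghalf]
    exact (hcont.tendsto (1/2)).mono_left nhdsWithin_le_nhds
  refine ⟨hcont.continuousOn, hmono, hg0, htend, ?_⟩
  have hne : (nhdsWithin (1/2:ℝ) (Set.Iio (1/2))).NeBot := nhdsLT_neBot _
  have h1 : ∀ᶠ θ in nhdsWithin (1/2:ℝ) (Set.Iio (1/2)), 1 < gfun θ :=
    htend.eventually_const_lt (by norm_num)
  have h2 : ∀ᶠ θ in nhdsWithin (1/2:ℝ) (Set.Iio (1/2)), θ ∈ Set.Ioo (0:ℝ) (1/2) := by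
    rw [eventually_iff]
    have : {θ : ℝ | θ ∈ Set.Ioo (0:ℝ) (1/2)} = Set.Ioi 0 ∩ Set.Iio (1/2) := by
      ext θ; simp [Set.mem_Ioo, Set.mem_Ioi, Set.mem_Iio, and_comm]
    rw [this]
    exact Filter.inter_mem (mem_nhdsWithin_of_mem_nhds (Ioi_mem_nhds (by norm_num)))
      self_mem_nhdsWithin
  obtain ⟨θ₀, hθ₀g, hθ₀mem⟩ := (h1.and h2).exists
  have hivt := intermediate_value_Icc hθ₀mem.1.le (hcont.continuousOn (s := Set.Icc 0 θ₀))
  have h1mem : (1:ℝ) ∈ Set.Icc (gfun 0) (gfun θ₀) := ⟨by rw [hg0]; norm_num, hθ₀g.le⟩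
  obtain ⟨θs, hθs, hθsval⟩ := hivt h1mem
  have hθs_mem : θs ∈ Set.Ioo (0:ℝ) (1/2) := by
    constructor
    · rcases lt_or_eq_of_le hθs.1 with h | h
      · exact h
      · exfalso
        rw [← h, hg0] at hθsval
        norm_num at hθsval
    · exact lt_of_le_of_lt hθs.2 hθ₀mem.2
  refine ⟨θs, ⟨hθs_mem, hθsval⟩, ?_⟩
  rintro θ' ⟨hθ'mem, hθ'val⟩
  exact hmono.injOn ⟨hθ'mem.1.le, hθ'mem.2⟩ ⟨hθs_mem.1.le, hθs_mem.2⟩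
    (by rw [hθ'val, hθsval])
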